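/- Suppose C(x) and C_{≥2}(x) are formal power series with C(0)=0, C'(0)=1, C_{≥2} ∈ x²·ℚ[[x]], related by C(x) = C(x)²/x - C_{≥2}(C(x)²/x), and C satisfies 2x·C·C' = C·(1+C) - x. Then C'(x) = ((C(x) - x)/x²)·(1 - C_{≥2}'(C(x)²/x)). -/

import Mathlib

open PowerSeries Finset

/-- Composition `f(g(X))` of formal power series (meaningful when `g` has zero
constant term). -/
noncomputable def pcomp (f g : ℚ⟦X⟧) : ℚ⟦X⟧ :=
  PowerSeries.mk fun n => ∑ k ∈ Finset.range (n + 1),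
    PowerSeries.coeff k f * PowerSeries.coeff n (g ^ k)

/-- Division of a power series by `X` (dropping the constant term). -/
noncomputable def shiftDiv (f : ℚ⟦X⟧) : ℚ⟦X⟧ :=
  PowerSeries.mk fun n => PowerSeries.coeff (n + 1) f

lemma X_mul_shiftDiv (f : ℚ⟦X⟧) (h : PowerSeries.constantCoeff f = 0) :
    X * shiftDiv f = f := by
  ext n
  cases n with
  | zero => simpa using h.symm
  | succ n => simp [shiftDiv, PowerSeries.coeff_succ_X_mul]

lemma coeff_pow_eq_zero {g : ℚ⟦X⟧} (hg : PowerSeries.constantCoeff g = 0)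
    {n k : ℕ} (h : n < k) : PowerSeries.coeff n (g ^ k) = 0 := by
  obtain ⟨q, hq⟩ : (X : ℚ⟦X⟧) ^ k ∣ g ^ k := pow_dvd_pow_of_dvd (PowerSeries.X_dvd_iff.2 hg) k
  rw [hq, PowerSeries.coeff_X_pow_mul' q k n, if_neg (by omega)]

lemma coeff_pcomp_of_lt {f g : ℚ⟦X⟧} (hg : PowerSeries.constantCoeff g = 0)
    {n N : ℕ} (h : n < N) :
    PowerSeries.coeff n (pcomp f g) =
      ∑ k ∈ Finset.range N, PowerSeries.coeff k f * PowerSeries.coeff n (g ^ k) := by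
  rw [pcomp, PowerSeries.coeff_mk]
  refine Finset.sum_subset (by intro x hx; simp_all; omega) ?_
  intro k _ hk
  simp only [Finset.mem_range, not_lt] at hk
  rw [coeff_pow_eq_zero hg (by omega), mul_zero]

lemma derivative_pcomp (f g : ℚ⟦X⟧) (hg : PowerSeries.constantCoeff g = 0) :
    d⁄dX ℚ (pcomp f g) = pcomp (d⁄dX ℚ f) g * d⁄dX ℚ g := by
  ext n
  set F : ℚ⟦X⟧ := ∑ k ∈ Finset.range (n+2), PowerSeries.C (PowerSeries.coeff k f) * g ^ k
    with hF
  have hcoeff : PowerSeries.coeff (n+1) (pcomp f g) = PowerSeries.coeff (n+1) F := by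
    rw [coeff_pcomp_of_lt (N := n+2) hg (by omega), hF, map_sum]
    exact Finset.sum_congr rfl fun k _ => by rw [PowerSeries.coeff_C_mul]
  have hL : PowerSeries.coeff n (d⁄dX ℚ (pcomp f g)) = PowerSeries.coeff n (d⁄dX ℚ F) := by
    rw [PowerSeries.coeff_derivative, PowerSeries.coeff_derivative, hcoeff]
  rw [hL]
  have hdF : d⁄dX ℚ F = (∑ k ∈ Finset.range (n+2),
      PowerSeries.C (PowerSeries.coeff k f) * (PowerSeries.C (k : ℚ) * g ^ (k-1))) *
        d⁄dX ℚ g := by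
    rw [hF, map_sum, Finset.sum_mul]
    refine Finset.sum_congr rfl fun k _ => ?_
    rw [Derivation.leibniz, Derivation.leibniz_pow, PowerSeries.derivative_C, nsmul_eq_mul,
      ← map_natCast (PowerSeries.C) k]
    simp only [smul_eq_mul]
    ring
  rw [hdF, PowerSeries.coeff_mul, PowerSeries.coeff_mul]
  refine Finset.sum_congr rfl fun p hp => ?_
  have hp1 : p.1 ≤ n := by
    have := Finset.HasAntidiagonal.mem_antidiagonal.1 hp; omega
  congr 1
  rw [coeff_pcomp_of_lt hg (show p.1 < n+1 by omega), map_sum]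
  rw [show n + 2 = (n+1) + 1 from rfl, Finset.sum_range_succ']
  simp only [Nat.cast_zero, map_zero, zero_mul, mul_zero, add_zero]
  refine Finset.sum_congr rfl fun j _ => ?_
  rw [PowerSeries.coeff_C_mul, PowerSeries.coeff_C_mul, PowerSeries.coeff_derivative,
    Nat.add_sub_cancel]
  push_cast
  ring

/-- If `C(0)=0`, `C'(0)=1`, `C_{≥2} ∈ x²ℚ[[x]]`, `C = C²/x - C_{≥2}(C²/x)` and
`2x·C·C' = C·(1+C) - x`, then `C' = ((C - x)/x²)·(1 - C_{≥2}'(C²/x))`. -/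
theorem two_connected_derivative (C C₂ : ℚ⟦X⟧)
    (hC0 : PowerSeries.constantCoeff C = 0) (hC1 : PowerSeries.coeff 1 C = 1)
    (h20 : PowerSeries.coeff 0 C₂ = 0) (h21 : PowerSeries.coeff 1 C₂ = 0)
    (hfun : C = shiftDiv (C ^ 2) - pcomp C₂ (shiftDiv (C ^ 2)))
    (hode : 2 * X * C * d⁄dX ℚ C = C * (1 + C) - X) :
    d⁄dX ℚ C = shiftDiv (shiftDiv (C - X)) *
      (1 - pcomp (d⁄dX ℚ C₂) (shiftDiv (C ^ 2))) := by
  set D : ℚ⟦X⟧ := shiftDiv (C ^ 2) with hDdef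
  have hC2 : PowerSeries.constantCoeff (C ^ 2) = 0 := by rw [map_pow, hC0]; ring
  have hXD : X * D = C ^ 2 := X_mul_shiftDiv _ hC2
  obtain ⟨q, hq⟩ : (X : ℚ⟦X⟧) ^ 2 ∣ C ^ 2 := pow_dvd_pow_of_dvd (PowerSeries.X_dvd_iff.2 hC0) 2
  have hD0 : PowerSeries.constantCoeff D = 0 := by
    have : D = X * q := by
      apply mul_left_cancel₀ (PowerSeries.X_ne_zero (R := ℚ))
      rw [hXD, hq]; ring
    rw [this]; simp
  have hder : X * d⁄dX ℚ D + D = 2 * C * d⁄dX ℚ C := by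
    have h := congrArg (d⁄dX ℚ) hXD
    rw [Derivation.leibniz, Derivation.leibniz_pow, PowerSeries.derivative_X] at h
    simp only [smul_eq_mul, nsmul_eq_mul, pow_one, Nat.cast_ofNat, mul_one] at h
    linear_combination h
  have hkey : X ^ 2 * d⁄dX ℚ D = C - X := by
    linear_combination X * hder + hode - hXD
  have hsd : X ^ 2 * shiftDiv (shiftDiv (C - X)) = C - X := by
    have e1 : PowerSeries.constantCoeff (C - X) = 0 := by
      rw [map_sub, hC0, PowerSeries.constantCoeff_X]; ring
    have e2 : PowerSeries.constantCoeff (shiftDiv (C - X)) = 0 := by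
      rw [← PowerSeries.coeff_zero_eq_constantCoeff_apply]
      simp [shiftDiv, hC1]
    calc X ^ 2 * shiftDiv (shiftDiv (C - X))
        = X * (X * shiftDiv (shiftDiv (C - X))) := by ring
      _ = X * shiftDiv (C - X) := by rw [X_mul_shiftDiv _ e2]
      _ = C - X := X_mul_shiftDiv _ e1
  have hdD : d⁄dX ℚ D = shiftDiv (shiftDiv (C - X)) :=
    mul_left_cancel₀ (pow_ne_zero 2 (PowerSeries.X_ne_zero (R := ℚ))) (by rw [hkey, hsd])
  have h := congrArg (d⁄dX ℚ) hfun
  rw [map_sub, derivative_pcomp _ _ hD0, hdD] at h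
  rw [h]
  ring
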